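/- Let H be a complex Hilbert space and let Q and Q₀ be orthogonal projections on H (bounded self-adjoint idempotent operators) with ‖Q − Q₀‖ < 1. Define W = (1 − (Q − Q₀)²)^{−1/2} · [Q Q₀ + (1 − Q)(1 − Q₀)], where (1 − (Q − Q₀)²)^{−1/2} is the inverse square root of the positive invertible operator 1 − (Q − Q₀)², given by the continuous functional calculus. Then W is a unitary operator on H and W⁻¹ Q W = Q₀. -/

import Mathlib

open Polynomial in
lemma aux_commute_cfc {H : Type*} [NormedAddCommGroup H] [InnerProductSpace ℂ H]
    [CompleteSpace H] (a b : H →L[ℂ] H) (ha : IsSelfAdjoint a) (hb : Commute b a)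
    (f : ℝ → ℝ) : Commute b (cfc f a) := by
  by_cases hf : ContinuousOn f (spectrum ℝ a)
  · rw [cfc_apply f a ha hf]
    suffices hall : ∀ g : C(spectrum ℝ a, ℝ), Commute b (cfcHom ha (R := ℝ) g) from hall _
    intro g
    have hcont : Continuous (cfcHom ha (R := ℝ)) := (cfcHom_isClosedEmbedding ha).continuous
    have hclosed : IsClosed {g : C(spectrum ℝ a, ℝ) | Commute b (cfcHom ha (R := ℝ) g)} := by
      simp only [Commute, SemiconjBy]
      exact isClosed_eq (by fun_prop) (by fun_prop)
    have hsub : (polynomialFunctions (spectrum ℝ a) : Set C(spectrum ℝ a, ℝ)) ⊆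
        {g : C(spectrum ℝ a, ℝ) | Commute b (cfcHom ha (R := ℝ) g)} := by
      intro g hg
      rw [SetLike.mem_coe, polynomialFunctions, Subalgebra.mem_map] at hg
      obtain ⟨p, -, rfl⟩ := hg
      have hkey : cfcHom ha (R := ℝ) (Polynomial.toContinuousMapOnAlgHom (spectrum ℝ a) p)
          = aeval a p := by
        rw [← cfc_polynomial p a ha, cfc_apply (fun x : ℝ => p.eval x) a ha (by fun_prop)]
        congr 1
      simp only [Set.mem_setOf_eq, hkey]
      clear hkey
      induction p using Polynomial.induction_on' with
      | add p q hp hq => simpa [map_add] using hp.add_right hq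
      | monomial n r =>
        rw [Polynomial.aeval_monomial]
        exact Commute.mul_right ((Algebra.commutes r b).symm) (hb.pow_right n)
    have htop := polynomialFunctions.topologicalClosure (spectrum ℝ a)
    have hmem : g ∈ closure (polynomialFunctions (spectrum ℝ a) : Set C(spectrum ℝ a, ℝ)) := by
      have : g ∈ (polynomialFunctions (spectrum ℝ a)).topologicalClosure := htop ▸ trivial
      exact this
    exact closure_minimal hsub hclosed hmem
  · rw [cfc_apply_of_not_continuousOn a hf]
    exact Commute.zero_right b

theorem reed_simon_unitary_conjugation
    (H : Type*) [NormedAddCommGroup H] [InnerProductSpace ℂ H] [CompleteSpace H]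
    (Q Q₀ : H →L[ℂ] H)
    (hQsa : IsSelfAdjoint Q) (hQidem : Q * Q = Q)
    (hQ₀sa : IsSelfAdjoint Q₀) (hQ₀idem : Q₀ * Q₀ = Q₀)
    (hnorm : ‖Q - Q₀‖ < 1)
    (W : H →L[ℂ] H)
    (hW : W = cfc (fun x : ℝ => x ^ (-(1/2 : ℝ))) (1 - (Q - Q₀) ^ 2)
        * (Q * Q₀ + (1 - Q) * (1 - Q₀))) :
    W ∈ unitary (H →L[ℂ] H) ∧ star W * Q * W = Q₀ := by
  rcases subsingleton_or_nontrivial H with hH | hH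
  · have : Subsingleton (H →L[ℂ] H) := ⟨fun x y => by ext v; exact Subsingleton.elim _ _⟩
    exact ⟨Unitary.mem_iff.mpr ⟨Subsingleton.elim _ _, Subsingleton.elim _ _⟩,
      Subsingleton.elim _ _⟩
  set a : H →L[ℂ] H := 1 - (Q - Q₀) ^ 2 with ha_def
  set f : ℝ → ℝ := fun x : ℝ => x ^ (-(1/2 : ℝ)) with hf_def
  set U : H →L[ℂ] H := Q * Q₀ + (1 - Q) * (1 - Q₀) with hU_def
  have hDsa : IsSelfAdjoint (Q - Q₀) := hQsa.sub hQ₀sa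
  have ha_sa : IsSelfAdjoint a := (IsSelfAdjoint.one (H →L[ℂ] H)).sub (hDsa.pow 2)
  -- spectrum of a is positive
  have hspec : ∀ x ∈ spectrum ℝ a, (0 : ℝ) < x := by
    intro x hx
    have h1 : a = algebraMap ℝ (H →L[ℂ] H) 1 - (Q - Q₀) ^ 2 := by
      rw [ha_def, map_one]
    rw [h1, ← spectrum.singleton_sub_eq] at hx
    obtain ⟨u, hu, y, hy, rfl⟩ := Set.mem_sub.mp hx
    rw [Set.mem_singleton_iff] at hu
    subst hu
    have hyle : ‖y‖ ≤ ‖(Q - Q₀) ^ 2‖ := spectrum.norm_le_norm_of_mem hy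
    have h2 : ‖(Q - Q₀) ^ 2‖ ≤ ‖Q - Q₀‖ * ‖Q - Q₀‖ := by
      rw [pow_two]; exact norm_mul_le _ _
    have h3 : ‖Q - Q₀‖ * ‖Q - Q₀‖ < 1 := by
      nlinarith [norm_nonneg (Q - Q₀)]
    have : |y| < 1 := by rw [← Real.norm_eq_abs]; linarith
    have := abs_lt.mp this
    linarith
  have hfc : ContinuousOn f (spectrum ℝ a) := fun x hx =>
    (Real.continuousAt_rpow_const x _ (Or.inl (hspec x hx).ne')).continuousWithinAt
  set S : H →L[ℂ] H := cfc f a with hS_def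
  have hS_sa : IsSelfAdjoint S := cfc_predicate f a
  -- S * S * a = 1
  have hTa : S * S * a = 1 := by
    rw [hS_def, ← cfc_mul f f a hfc hfc]
    nth_rewrite 2 [← cfc_id ℝ a ha_sa]
    rw [← cfc_mul (fun x => f x * f x) id a (hfc.mul hfc) (continuousOn_id)]
    have : (spectrum ℝ a).EqOn (fun x => (f x * f x) * id x) (fun _ => (1 : ℝ)) := by
      intro x hx
      have hx0 : (0 : ℝ) < x := hspec x hx
      simp only [hf_def, id_eq]
      rw [← Real.rpow_add hx0]
      norm_num
      rw [Real.rpow_neg_one]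
      exact inv_mul_cancel₀ hx0.ne'
    rw [cfc_congr this, cfc_const 1 a ha_sa, map_one]
  -- commutation facts
  have haS : Commute a S := aux_commute_cfc a a ha_sa (Commute.refl a) f
  have haT : a * (S * S) = 1 := by
    rw [(haS.mul_right haS).eq]
    exact hTa
  -- algebraic identities
  have hQ' : ∀ x : H →L[ℂ] H, Q * (Q * x) = Q * x := fun x => by rw [← mul_assoc, hQidem]
  have hQ₀' : ∀ x : H →L[ℂ] H, Q₀ * (Q₀ * x) = Q₀ * x := fun x => by rw [← mul_assoc, hQ₀idem]
  have hstarU : star U = Q₀ * Q + (1 - Q₀) * (1 - Q) := by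
    simp [hU_def, star_add, star_mul, star_sub, star_one, hQsa.star_eq, hQ₀sa.star_eq]
  have hsU : star U * U = a := by
    rw [hstarU, hU_def, ha_def]
    simp only [mul_sub, sub_mul, mul_add, add_mul, mul_one, one_mul, pow_two, mul_assoc,
      hQ', hQ₀', hQidem, hQ₀idem]
    abel
  have hUs : U * star U = a := by
    rw [hstarU, hU_def, ha_def]
    simp only [mul_sub, sub_mul, mul_add, add_mul, mul_one, one_mul, pow_two, mul_assoc,
      hQ', hQ₀', hQidem, hQ₀idem]
    abel
  have hQU : Q * U = U * Q₀ := by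
    rw [hU_def]
    simp only [mul_sub, sub_mul, mul_add, add_mul, mul_one, one_mul, mul_assoc,
      hQ', hQ₀', hQidem, hQ₀idem]
    abel
  have hQa : Commute Q a := by
    show Q * a = a * Q
    rw [ha_def]
    simp only [mul_sub, sub_mul, mul_add, add_mul, mul_one, one_mul, pow_two, mul_assoc,
      hQ', hQ₀', hQidem, hQ₀idem]
    abel
  have hQ₀a : Commute Q₀ a := by
    show Q₀ * a = a * Q₀
    rw [ha_def]
    simp only [mul_sub, sub_mul, mul_add, add_mul, mul_one, one_mul, pow_two, mul_assoc,
      hQ', hQ₀', hQidem, hQ₀idem]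
    abel
  have hUa : Commute U a := by
    show U * a = a * U
    calc U * a = U * (star U * U) := by rw [hsU]
      _ = U * star U * U := by rw [mul_assoc]
      _ = a * U := by rw [hUs]
  have hQS : Commute Q S := aux_commute_cfc a Q ha_sa hQa f
  have hQ₀S : Commute Q₀ S := aux_commute_cfc a Q₀ ha_sa hQ₀a f
  have hUS : Commute U S := aux_commute_cfc a U ha_sa hUa f
  have hUT : Commute U (S * S) := hUS.mul_right hUS
  have hWdef : W = S * U := by rw [hW, hS_def, hU_def]
  have hWstar : star W = star U * S := by rw [hWdef, star_mul, hS_sa.star_eq]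
  have h1 : star W * W = 1 := by
    calc star W * W = star U * (S * (S * U)) := by rw [hWstar, hWdef]; simp only [mul_assoc]
      _ = star U * (U * (S * S)) := by rw [← mul_assoc S S U, ← hUT.eq]
      _ = star U * U * (S * S) := by simp only [mul_assoc]
      _ = a * (S * S) := by rw [hsU]
      _ = 1 := haT
  have h2 : W * star W = 1 := by
    calc W * star W = S * (U * star U) * S := by
          rw [hWstar, hWdef]; simp only [mul_assoc]
      _ = S * a * S := by rw [hUs]
      _ = S * (S * a) := by rw [mul_assoc, haS.eq]
      _ = 1 := by rw [← mul_assoc]; exact hTa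
  refine ⟨Unitary.mem_iff.mpr ⟨h1, h2⟩, ?_⟩
  calc star W * Q * W = star U * (S * Q * (S * U)) := by
        rw [hWstar, hWdef]; simp only [mul_assoc]
    _ = star U * (Q * (S * (S * U))) := by rw [← hQS.eq, mul_assoc]
    _ = star U * (Q * (U * (S * S))) := by rw [← mul_assoc S S U, ← hUT.eq]
    _ = star U * (Q * U * (S * S)) := by simp only [mul_assoc]
    _ = star U * (U * Q₀ * (S * S)) := by rw [hQU]
    _ = star U * U * (Q₀ * (S * S)) := by simp only [mul_assoc]
    _ = a * (Q₀ * (S * S)) := by rw [hsU]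
    _ = a * (S * S * Q₀) := by rw [(hQ₀S.mul_right hQ₀S).eq]
    _ = a * (S * S) * Q₀ := by simp only [mul_assoc]
    _ = Q₀ := by rw [haT, one_mul]
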